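/- For every even integer k ≥ 2 and every integer t ≥ 1 there exists a permutation of [n] with n = k·t²/2 (namely, kt/2 consecutive decreasing blocks of length t, each block's values all larger than those of all earlier blocks) whose longest increasing-first k-modal subsequence has length at most k·t. -/

import Mathlib

/-- `b : Fin m → ℤ` is an increasing-first `k`-modal sequence: it can be cut into at most
`k + 1` segments, alternately strictly increasing and strictly decreasing, starting with an
increasing segment (segments may be degenerate). Sequences of length at most 1 always qualify. -/
def IncFirstModal (k : ℕ) {m : ℕ} (b : Fin m → ℤ) : Prop :=
  ∃ j : ℕ → ℕ, Monotone j ∧ j 0 = 0 ∧ m - 1 ≤ j (k + 1) ∧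
    ∀ ℓ s, ℓ ≤ k → j ℓ ≤ s → s + 1 ≤ j (ℓ + 1) →
      ∀ (hs : s < m) (hs1 : s + 1 < m),
        if Even ℓ then b ⟨s, hs⟩ < b ⟨s + 1, hs1⟩ else b ⟨s + 1, hs1⟩ < b ⟨s, hs⟩

/-- `b : Fin m → ℤ` is a decreasing-first `k`-modal sequence: at most `k + 1` alternately
strictly decreasing and strictly increasing segments, starting with a decreasing segment. -/
def DecFirstModal (k : ℕ) {m : ℕ} (b : Fin m → ℤ) : Prop :=
  ∃ j : ℕ → ℕ, Monotone j ∧ j 0 = 0 ∧ m - 1 ≤ j (k + 1) ∧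
    ∀ ℓ s, ℓ ≤ k → j ℓ ≤ s → s + 1 ≤ j (ℓ + 1) →
      ∀ (hs : s < m) (hs1 : s + 1 < m),
        if Even ℓ then b ⟨s + 1, hs1⟩ < b ⟨s, hs⟩ else b ⟨s, hs⟩ < b ⟨s + 1, hs1⟩

/-- `a : Fin n → ℤ` is a permutation of `[n] = {1, …, n}`. -/
def IsPermOn (n : ℕ) (a : Fin n → ℤ) : Prop :=
  Function.Injective a ∧ ∀ i, 1 ≤ a i ∧ a i ≤ (n : ℤ)

/-- The subsequence selected by the strictly monotone index map `s` ends at position `i`. -/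
def EndsAt {n L : ℕ} (s : Fin L → Fin n) (i : Fin n) : Prop :=
  ∃ h : 0 < L, s ⟨L - 1, Nat.sub_lt h Nat.one_pos⟩ = i

/-- The subsequence selected by the strictly monotone index map `s` starts at position `i`. -/
def StartsAt {n L : ℕ} (s : Fin L → Fin n) (i : Fin n) : Prop :=
  ∃ h : 0 < L, s ⟨0, h⟩ = i

/-- For every even `k ≥ 2` and `t ≥ 1` there is a permutation of `[n]`, `n = k·t²/2`, whose
longest increasing-first `k`-modal subsequence has length at most `k·t`. -/
private lemma decomp_aux (t u a v b : ℕ) (ha1 : 1 ≤ a) (ha2 : a ≤ t)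
    (hb1 : 1 ≤ b) (hb2 : b ≤ t) (h : u * t + a = v * t + b) : u = v ∧ a = b := by
  rcases lt_trichotomy u v with H | H | H
  · exfalso
    have h1 : (u + 1) * t ≤ v * t := mul_le_mul_left (by omega) t
    have h2 : (u + 1) * t = u * t + t := by ring
    linarith
  · exact ⟨H, by subst H; exact Nat.add_left_cancel h⟩
  · exfalso
    have h1 : (v + 1) * t ≤ u * t := mul_le_mul_left (by omega) t
    have h2 : (v + 1) * t = v * t + t := by ring
    linarith

private lemma cross_aux (t u r v ρ : ℕ) (hρ : ρ < t) (huv : u < v) :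
    u * t + (t - r) < v * t + (t - ρ) := by
  have h1 : (u + 1) * t ≤ v * t := mul_le_mul_left (by omega) t
  have h2 : (u + 1) * t = u * t + t := by ring
  have h3 : t - r ≤ t := Nat.sub_le _ _
  have h4 : 1 ≤ t - ρ := by omega
  linarith

theorem stmt13 (k t : ℕ) (hk : Even k) (hk2 : 2 ≤ k) (ht : 1 ≤ t) :
    ∃ a : Fin (k * t ^ 2 / 2) → ℤ, IsPermOn (k * t ^ 2 / 2) a ∧
      ∀ (L : ℕ) (s : Fin L → Fin (k * t ^ 2 / 2)), StrictMono s →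
        IncFirstModal k (a ∘ s) → L ≤ k * t := by
  obtain ⟨c, hc⟩ := hk
  have hkc : k = 2 * c := by omega
  have hc1 : 1 ≤ c := by omega
  set n := k * t ^ 2 / 2 with hn
  have hnt : n = c * t * t := by
    have h2 : k * t ^ 2 = 2 * (c * t * t) := by rw [hkc]; ring
    rw [hn, h2, Nat.mul_div_cancel_left _ (by norm_num)]
  set B := c * t with hB
  have ht0 : 0 < t := ht
  -- the permutation
  set a : Fin n → ℤ :=
    fun i => (((i : ℕ) / t * t + (t - (i : ℕ) % t) : ℕ) : ℤ) with ha
  -- basic facts about the value function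
  have hdiv_lt : ∀ i : Fin n, (i : ℕ) / t < B := by
    intro i
    have : (i : ℕ) < B * t := lt_of_lt_of_eq i.isLt hnt
    exact (Nat.div_lt_iff_lt_mul ht0).mpr this
  have hmod_lt : ∀ x : ℕ, x % t < t := fun x => Nat.mod_lt x ht0
  refine ⟨a, ⟨?_, ?_⟩, ?_⟩
  · -- injective
    intro i i' hii
    simp only [ha] at hii
    have h : (i : ℕ) / t * t + (t - (i : ℕ) % t)
        = (i' : ℕ) / t * t + (t - (i' : ℕ) % t) := by exact_mod_cast hii
    have h1 := hmod_lt (i : ℕ)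
    have h2 := hmod_lt (i' : ℕ)
    have hd := decomp_aux t ((i : ℕ) / t) (t - (i : ℕ) % t) ((i' : ℕ) / t)
      (t - (i' : ℕ) % t) (by omega) (by omega) (by omega) (by omega) h
    have e1 := Nat.div_add_mod (i : ℕ) t
    have e2 := Nat.div_add_mod (i' : ℕ) t
    have : (i : ℕ) = (i' : ℕ) := by
      have hm : (i : ℕ) % t = (i' : ℕ) % t := by omega
      rw [← e1, ← e2, hd.1, hm]
    exact Fin.ext this
  · -- bounds
    intro i
    have h1 := hmod_lt (i : ℕ)
    constructor
    · have h2 : 1 ≤ (i : ℕ) / t * t + (t - (i : ℕ) % t) := by omega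
      simp only [ha]
      exact_mod_cast h2
    · have hub : (i : ℕ) / t * t + (t - (i : ℕ) % t) ≤ n := by
        have hq : (i : ℕ) / t + 1 ≤ B := hdiv_lt i
        have : ((i : ℕ) / t + 1) * t ≤ B * t := mul_le_mul_left hq t
        have he : ((i : ℕ) / t + 1) * t = (i : ℕ) / t * t + t := by ring
        have hB' : B * t = n := hnt.symm
        omega
      simp only [ha]
      exact_mod_cast hub
  · -- the subsequence bound
    intro L s hs hmod
    obtain ⟨j, hjm, hj0, hjk1, hjseg⟩ := hmod
    -- block of position i in the subsequence
    set blk : ℕ → ℕ := fun i => if h : i < L then ((s ⟨i, h⟩ : ℕ) / t) else 0 with hblk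
    set bv : ℕ → ℤ := fun i => if h : i < L then a (s ⟨i, h⟩) else 0 with hbv
    have hblkF : ∀ i : Fin L, blk (i : ℕ) = (s i : ℕ) / t := by
      intro i; simp only [hblk, dif_pos i.isLt, Fin.eta]
    have hblkB : ∀ i, i < L → blk i < B := by
      intro i h
      simp only [hblk, dif_pos h]
      exact hdiv_lt _
    have hblkmono : ∀ i i', i ≤ i' → i' < L → blk i ≤ blk i' := by
      intro i i' hle h'
      have h : i < L := lt_of_le_of_lt hle h'
      simp only [hblk, dif_pos h, dif_pos h']
      exact Nat.div_le_div_right (by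
        have := hs.monotone (show (⟨i, h⟩ : Fin L) ≤ ⟨i', h'⟩ from hle)
        exact this)
    -- value comparisons
    have hcross : ∀ i i', (hi : i < L) → (hi' : i' < L) → blk i < blk i' → bv i < bv i' := by
      intro i i' hi hi' hlt
      simp only [hblk, dif_pos hi, dif_pos hi'] at hlt
      simp only [hbv, dif_pos hi, dif_pos hi', ha]
      have := cross_aux t ((s ⟨i, hi⟩ : ℕ) / t) ((s ⟨i, hi⟩ : ℕ) % t)
        ((s ⟨i', hi'⟩ : ℕ) / t) ((s ⟨i', hi'⟩ : ℕ) % t) (hmod_lt _) hlt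
      exact_mod_cast this
    have hsame : ∀ i i', (hi : i < L) → (hi' : i' < L) → i < i' → blk i = blk i' →
        bv i' < bv i := by
      intro i i' hi hi' hlt heq
      simp only [hblk, dif_pos hi, dif_pos hi'] at heq
      simp only [hbv, dif_pos hi, dif_pos hi', ha]
      have hslt : (s ⟨i, hi⟩ : ℕ) < (s ⟨i', hi'⟩ : ℕ) := hs (show (⟨i, hi⟩ : Fin L) < ⟨i', hi'⟩ from hlt)
      have e1 := Nat.div_add_mod (s ⟨i, hi⟩ : ℕ) t
      have e2 := Nat.div_add_mod (s ⟨i', hi'⟩ : ℕ) t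
      have hmlt : (s ⟨i, hi⟩ : ℕ) % t < (s ⟨i', hi'⟩ : ℕ) % t := by
        rw [← heq] at e2
        omega
      have hout : (s ⟨i', hi'⟩ : ℕ) / t * t + (t - (s ⟨i', hi'⟩ : ℕ) % t)
          < (s ⟨i, hi⟩ : ℕ) / t * t + (t - (s ⟨i, hi⟩ : ℕ) % t) := by
        rw [heq]
        exact Nat.add_lt_add_left (by
          have := hmod_lt (s ⟨i', hi'⟩ : ℕ); omega) _
      exact_mod_cast hout
    -- modal pair facts
    have hpair : ∀ ℓ i, ℓ ≤ k → (h1 : i + 1 < L) → j ℓ ≤ i → i + 1 ≤ j (ℓ + 1) →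
        (Even ℓ → bv i < bv (i + 1)) ∧ (¬ Even ℓ → bv (i + 1) < bv i) := by
      intro ℓ i hℓ h1 hj1 hj2
      have hi : i < L := by omega
      have := hjseg ℓ i hℓ hj1 hj2 hi h1
      simp only [hbv, dif_pos hi, dif_pos h1]
      constructor
      · intro he; rw [if_pos he] at this; exact this
      · intro he; rw [if_neg he] at this; exact this
    -- governing segment
    have hgov : ∀ i, i + 1 < L → ∃ ℓ, ℓ ≤ k ∧ j ℓ ≤ i ∧ i + 1 ≤ j (ℓ + 1) := by
      intro i hi
      set ℓ := Nat.findGreatest (fun m => j m ≤ i) k with hℓ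
      have hP0 : j 0 ≤ i := by omega
      have hjl : j ℓ ≤ i :=
        Nat.findGreatest_spec (P := fun m => j m ≤ i) (Nat.zero_le k) hP0
      have hℓk : ℓ ≤ k := Nat.findGreatest_le k
      refine ⟨ℓ, hℓk, hjl, ?_⟩
      rcases eq_or_lt_of_le hℓk with he | hlt
      · have : L - 1 ≤ j (k + 1) := hjk1
        rw [he]; omega
      · have : ¬ (j (ℓ + 1) ≤ i) :=
          Nat.findGreatest_is_greatest (P := fun m => j m ≤ i)
            (show Nat.findGreatest (fun m => j m ≤ i) k < ℓ + 1 by omega)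
            (show ℓ + 1 ≤ k by omega)
        omega
    -- finding an increasing block step
    have hstep : ∀ d u, u + d < L → blk u < blk (u + d) →
        ∃ r, u ≤ r ∧ r + 1 ≤ u + d ∧ blk r < blk (r + 1) := by
      intro d
      induction d with
      | zero => intro u h hlt; rw [Nat.add_zero] at hlt; omega
      | succ d ih =>
        intro u h hlt
        rcases Nat.lt_or_ge (blk (u + d)) (blk (u + d + 1)) with h' | h'
        · exact ⟨u + d, by omega, by omega, by rwa [show u + d + 1 = u + (d+1) by ring]⟩
        · have hlt' : blk u < blk (u + d) := by
            have : blk (u + (d + 1)) ≤ blk (u + d) := by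
              rw [show u + (d+1) = u + d + 1 by ring]; exact h'
            omega
          obtain ⟨r, hr1, hr2, hr3⟩ := ih u (by omega) hlt'
          exact ⟨r, hr1, by omega, hr3⟩
    -- no two multi-blocks share a governing odd segment
    have hnotwo : ∀ ℓ, ℓ ≤ k → ¬ Even ℓ → ∀ i i', i + 1 < L → i' + 1 < L →
        j ℓ ≤ i → i + 1 ≤ j (ℓ + 1) → j ℓ ≤ i' → i' + 1 ≤ j (ℓ + 1) →
        blk i = blk (i + 1) → blk i' = blk (i' + 1) → blk (i + 1) < blk i' → False := by
      intro ℓ hℓ hodd i i' h1 h1' hj1 hj2 hj1' hj2' hbq hbq' hblt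
      have hii : i + 1 < i' := by
        by_contra hcon
        have : blk i' ≤ blk (i + 1) := hblkmono i' (i + 1) (by omega) (by omega)
        omega
      obtain ⟨r, hr1, hr2, hr3⟩ := hstep (i' - (i + 1)) (i + 1)
        (by omega) (by rw [show i + 1 + (i' - (i+1)) = i' by omega]; exact hblt)
      have hr2' : r + 1 ≤ i' := by omega
      have hinc : bv r < bv (r + 1) := hcross r (r + 1) (by omega) (by omega) hr3
      have hdec : bv (r + 1) < bv r := (hpair ℓ r hℓ (by omega) (by omega) (by omega)).2 hodd
      linarith
    -- fibers
    classical
    set F : ℕ → Finset (Fin L) :=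
      fun q => Finset.univ.filter (fun i : Fin L => blk (i : ℕ) = q) with hF
    have hLsum : L = ∑ q ∈ Finset.range B, (F q).card := by
      have := Finset.card_eq_sum_card_fiberwise
        (f := fun i : Fin L => blk (i : ℕ)) (s := Finset.univ) (t := Finset.range B)
        (fun i _ => Finset.mem_range.mpr (hblkB _ i.isLt))
      simpa [hF] using this
    have hcard_t : ∀ q, (F q).card ≤ t := by
      intro q
      have : (F q).card ≤ (Finset.range t).card := by
        apply Finset.card_le_card_of_injOn (fun i => (s i : ℕ) % t)
        · intro i _; exact Finset.mem_range.mpr (hmod_lt _)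
        · intro i hi i' hi' heq
          simp only [hF, Finset.coe_filter, Finset.mem_univ, true_and,
            Set.mem_setOf_eq, hblkF] at hi hi'
          have e1 := Nat.div_add_mod (s i : ℕ) t
          have e2 := Nat.div_add_mod (s i' : ℕ) t
          have hdd : (s i : ℕ) / t = (s i' : ℕ) / t := by rw [hi, hi']
          rw [hdd] at e1
          have heq' : (s i : ℕ) % t = (s i' : ℕ) % t := heq
          have hieq : (s i : ℕ) = (s i' : ℕ) := by omega
          exact hs.injective (Fin.ext hieq)
      simpa using this
    -- multi blocks
    set M : Finset ℕ := (Finset.range B).filter (fun q => 2 ≤ (F q).card) with hM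
    have hMpair : ∀ q, ∃ ℓ, q ∈ M → (ℓ % 2 = 1 ∧ ℓ ≤ k ∧
        ∃ i, i + 1 < L ∧ j ℓ ≤ i ∧ i + 1 ≤ j (ℓ + 1) ∧ blk i = q ∧ blk (i + 1) = q) := by
      intro q
      by_cases hq : q ∈ M
      swap
      · exact ⟨0, fun h => absurd h hq⟩
      have h2 : 1 < (F q).card := by
        simp only [hM, Finset.mem_filter] at hq; omega
      obtain ⟨x, hx, y, hy, hxy⟩ := Finset.one_lt_card.mp h2
      simp only [hF, Finset.mem_filter] at hx hy
      -- wlog x < y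
      obtain ⟨i, i', hlt, hi'L, hbi, hbi'⟩ :
          ∃ u u' : ℕ, u < u' ∧ u' < L ∧ blk u = q ∧ blk u' = q := by
        rcases lt_or_gt_of_ne hxy with h | h
        · exact ⟨x, y, h, y.isLt, hx.2, hy.2⟩
        · exact ⟨y, x, h, x.isLt, hy.2, hx.2⟩
      have hiL : i + 1 < L := by omega
      have hbmid : blk (i + 1) = q := by
        have h1 : blk i ≤ blk (i + 1) := hblkmono i (i + 1) (by omega) hiL
        have h2 : blk (i + 1) ≤ blk i' := hblkmono (i + 1) i' (by omega) hi'L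
        omega
      obtain ⟨ℓ, hℓk, hj1, hj2⟩ := hgov i hiL
      have hdec : bv (i + 1) < bv i := hsame i (i + 1) (by omega) hiL (by omega)
        (by rw [hbi, hbmid])
      have hodd : ¬ Even ℓ := by
        intro he
        have := (hpair ℓ i hℓk hiL hj1 hj2).1 he
        linarith
      refine ⟨ℓ, fun _ => ⟨?_, hℓk, i, hiL, hj1, hj2, hbi, hbmid⟩⟩
      rw [Nat.even_iff] at hodd; omega
    choose g hg using hMpair
    have hMcard : M.card ≤ c := by
      have : M.card ≤ (Finset.range c).card := by
        apply Finset.card_le_card_of_injOn (fun q => g q / 2)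
        · intro q hq
          obtain ⟨hodd, hle, _⟩ := hg q hq
          exact Finset.mem_range.mpr (by dsimp only; omega)
        · intro q hq q' hq' heq
          obtain ⟨hodd, hle, i, hiL, hj1, hj2, hbi, hbmid⟩ := hg q (Finset.mem_coe.mp hq)
          obtain ⟨hodd', hle', i', hiL', hj1', hj2', hbi', hbmid'⟩ :=
            hg q' (Finset.mem_coe.mp hq')
          have heq' : g q / 2 = g q' / 2 := heq
          have hgeq : g q = g q' := by omega
          by_contra hne
          have hoddP : ¬ Even (g q) := by rw [Nat.even_iff]; omega
          rcases lt_or_gt_of_ne hne with h | h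
          · exact hnotwo (g q) hle hoddP i i' hiL hiL' hj1 hj2
              (hgeq ▸ hj1') (hgeq ▸ hj2') (by rw [hbi, hbmid]) (by rw [hbi', hbmid'])
              (by rw [hbmid, hbi'] ; exact h)
          · exact hnotwo (g q) hle hoddP i' i hiL' hiL (hgeq ▸ hj1') (hgeq ▸ hj2')
              hj1 hj2 (by rw [hbi', hbmid']) (by rw [hbi, hbmid])
              (by rw [hbmid', hbi]; exact h)
      simpa using this
    -- final count
    have hsplit : ∑ q ∈ M, (F q).card
        + ∑ q ∈ (Finset.range B).filter (fun q => ¬ 2 ≤ (F q).card), (F q).card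
        = ∑ q ∈ Finset.range B, (F q).card := by
      rw [hM]
      exact Finset.sum_filter_add_sum_filter_not (Finset.range B) _ _
    have hsum1 : ∑ q ∈ M, (F q).card ≤ c * t := by
      calc ∑ q ∈ M, (F q).card ≤ ∑ q ∈ M, t := Finset.sum_le_sum (fun q _ => hcard_t q)
        _ = M.card * t := by rw [Finset.sum_const, smul_eq_mul]
        _ ≤ c * t := mul_le_mul_left hMcard t
    have hsum2 : ∑ q ∈ (Finset.range B).filter (fun q => ¬ 2 ≤ (F q).card), (F q).card
        ≤ c * t := by
      calc ∑ q ∈ (Finset.range B).filter (fun q => ¬ 2 ≤ (F q).card), (F q).card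
          ≤ ∑ q ∈ (Finset.range B).filter (fun q => ¬ 2 ≤ (F q).card), 1 :=
            Finset.sum_le_sum (fun q hq => by
              simp only [Finset.mem_filter] at hq; omega)
        _ = ((Finset.range B).filter (fun q => ¬ 2 ≤ (F q).card)).card := by
            rw [Finset.sum_const, smul_eq_mul, mul_one]
        _ ≤ (Finset.range B).card := Finset.card_le_card (Finset.filter_subset _ _)
        _ = B := Finset.card_range B
        _ = c * t := hB
    have hL2 : L ≤ c * t + c * t := by omega
    rw [hkc]
    have hr : 2 * c * t = c * t + c * t := by ring
    omega
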